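/- arXiv:1801.10251 — 2 statements merged into one kernel-verified Lean document; each statement's English description precedes it below -/
import Mathlib

section
/- Let U₁, …, U_n (n ≥ 2) be i.i.d. uniform [0,1] random variables and define V(r) = (n−1)^{-1/2} ∑_{k=2}^n [1{U_k ≤ r₁}·1{U_{k−1} ≤ r₂} − r₁r₂] for r ∈ [0,1]². Then for any r, s ∈ [0,1]², E[V(r)·V(s)] = (r₁∧s₁)(r₂∧s₂) + ((n−2)/(n−1))·[(r₁∧s₂)r₂s₁ + (r₂∧s₁)r₁s₂] − (1 + 2(n−2)/(n−1))·r₁r₂s₁s₂. -/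
open MeasureTheory ProbabilityTheory Set

section V2TAux

variable {Ω : Type*} [MeasurableSpace Ω] (μ : Measure Ω) [IsProbabilityMeasure μ]
  (U : ℕ → Ω → ℝ)

lemma V2T_meas_unif (X : Ω → ℝ) (hX : Measurable X)
    (h : Measure.map X μ = volume.restrict (Icc (0:ℝ) 1)) {a : ℝ} (ha : a ∈ Icc (0:ℝ) 1) :
    μ (X ⁻¹' Iic a) = ENNReal.ofReal a := by
  rw [← Measure.map_apply hX measurableSet_Iic, h,
    Measure.restrict_apply measurableSet_Iic]
  have : Iic a ∩ Icc (0:ℝ) 1 = Icc 0 a := by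
    ext x
    simp only [Set.mem_inter_iff, Set.mem_Iic, Set.mem_Icc]
    exact ⟨fun ⟨h1, h2, _⟩ => ⟨h2, h1⟩, fun ⟨h1, h2⟩ => ⟨h2, h1, h2.trans ha.2⟩⟩
  rw [this, Real.volume_Icc, sub_zero]

lemma V2T_prod_ind_eq_indicator (S : Finset ℕ) (c : ℕ → ℝ) :
    (fun ω => ∏ i ∈ S, (if U i ω ≤ c i then (1:ℝ) else 0))
      = Set.indicator (⋂ i ∈ S, U i ⁻¹' Iic (c i)) (1 : Ω → ℝ) := by
  funext ω
  by_cases h : ω ∈ ⋂ i ∈ S, U i ⁻¹' Iic (c i)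
  · rw [Set.indicator_of_mem h, Pi.one_apply]
    simp only [Set.mem_iInter, Set.mem_preimage, Set.mem_Iic] at h
    exact Finset.prod_eq_one fun i hi => if_pos (h i hi)
  · rw [Set.indicator_of_notMem h]
    simp only [Set.mem_iInter, Set.mem_preimage, Set.mem_Iic, not_forall] at h
    obtain ⟨i, hi, hlt⟩ := h
    exact Finset.prod_eq_zero hi (if_neg hlt)

variable (hU : ∀ k, Measurable (U k))
  (hindep : iIndepFun U μ)
  (hunif : ∀ k, Measure.map (U k) μ = volume.restrict (Set.Icc (0:ℝ) 1))

include hU hindep hunif in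
lemma V2T_integral_prod_ind (S : Finset ℕ) (c : ℕ → ℝ) (hc : ∀ i ∈ S, c i ∈ Icc (0:ℝ) 1) :
    ∫ ω, ∏ i ∈ S, (if U i ω ≤ c i then (1:ℝ) else 0) ∂μ = ∏ i ∈ S, c i := by
  rw [V2T_prod_ind_eq_indicator]
  have hmeas : MeasurableSet (⋂ i ∈ S, U i ⁻¹' Iic (c i)) :=
    MeasurableSet.biInter S.countable_toSet fun i _ => (hU i) measurableSet_Iic
  rw [integral_indicator_one hmeas, measureReal_def]
  rw [hindep.measure_inter_preimage_eq_mul S (sets := fun i => Iic (c i))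
    (fun i _ => measurableSet_Iic)]
  rw [ENNReal.toReal_prod]
  refine Finset.prod_congr rfl fun i hi => ?_
  rw [V2T_meas_unif μ (U i) (hU i) (hunif i) (hc i hi), ENNReal.toReal_ofReal (hc i hi).1]

include hU hindep hunif in
lemma V2T_E2 (i j : ℕ) (hij : i ≠ j) (a b : ℝ) (ha : a ∈ Icc (0:ℝ) 1) (hb : b ∈ Icc (0:ℝ) 1) :
    ∫ ω, (if U i ω ≤ a then (1:ℝ) else 0) * (if U j ω ≤ b then (1:ℝ) else 0) ∂μ = a * b := by
  classical
  have h1 : i ∉ ({j} : Finset ℕ) := by simp [hij]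
  have key := V2T_integral_prod_ind μ U hU hindep hunif ({i, j})
    (fun m => if m = i then a else b)
    (by intro m hm
        simp only [Finset.mem_insert, Finset.mem_singleton] at hm
        rcases hm with rfl | rfl <;> simp [hij.symm, ha, hb])
  rw [show ({i, j} : Finset ℕ) = insert i {j} from rfl] at key
  simp only [Finset.prod_insert h1, Finset.prod_singleton, if_neg hij.symm, if_true,
    eq_self_iff_true] at key
  simpa using key

include hU hindep hunif in
lemma V2T_E3 (i j k : ℕ) (hij : i ≠ j) (hik : i ≠ k) (hjk : j ≠ k)
    (a b d : ℝ) (ha : a ∈ Icc (0:ℝ) 1) (hb : b ∈ Icc (0:ℝ) 1) (hd : d ∈ Icc (0:ℝ) 1) :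
    ∫ ω, (if U i ω ≤ a then (1:ℝ) else 0) * (if U j ω ≤ b then (1:ℝ) else 0)
        * (if U k ω ≤ d then (1:ℝ) else 0) ∂μ = a * b * d := by
  classical
  have h2 : j ∉ ({k} : Finset ℕ) := by simp [hjk]
  have h1 : i ∉ ({j, k} : Finset ℕ) := by simp [hij, hik]
  have key := V2T_integral_prod_ind μ U hU hindep hunif ({i, j, k})
    (fun m => if m = i then a else if m = j then b else d)
    (by intro m hm
        simp only [Finset.mem_insert, Finset.mem_singleton] at hm
        rcases hm with rfl | rfl | rfl <;> simp [hij.symm, hik.symm, hjk.symm, ha, hb, hd])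
  rw [show ({i, j, k} : Finset ℕ) = insert i (insert j {k}) from rfl] at key
  simp only [Finset.prod_insert h1, Finset.prod_insert h2, Finset.prod_singleton] at key
  simp only [if_neg hij.symm, if_neg hik.symm, if_neg hjk.symm, eq_self_iff_true,
    if_true] at key
  simp only [mul_assoc]
  exact key

include hU hindep hunif in
lemma V2T_E4 (i j k l : ℕ) (hij : i ≠ j) (hik : i ≠ k) (hil : i ≠ l)
    (hjk : j ≠ k) (hjl : j ≠ l) (hkl : k ≠ l)
    (a b d e : ℝ) (ha : a ∈ Icc (0:ℝ) 1) (hb : b ∈ Icc (0:ℝ) 1)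
    (hd : d ∈ Icc (0:ℝ) 1) (he : e ∈ Icc (0:ℝ) 1) :
    ∫ ω, (if U i ω ≤ a then (1:ℝ) else 0) * (if U j ω ≤ b then (1:ℝ) else 0)
        * (if U k ω ≤ d then (1:ℝ) else 0) * (if U l ω ≤ e then (1:ℝ) else 0) ∂μ
      = a * b * d * e := by
  classical
  have h3 : k ∉ ({l} : Finset ℕ) := by simp [hkl]
  have h2 : j ∉ ({k, l} : Finset ℕ) := by simp [hjk, hjl]
  have h1 : i ∉ ({j, k, l} : Finset ℕ) := by simp [hij, hik, hil]
  have key := V2T_integral_prod_ind μ U hU hindep hunif ({i, j, k, l})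
    (fun m => if m = i then a else if m = j then b else if m = k then d else e)
    (by intro m hm
        simp only [Finset.mem_insert, Finset.mem_singleton] at hm
        rcases hm with rfl | rfl | rfl | rfl <;>
          simp [hij.symm, hik.symm, hil.symm, hjk.symm, hjl.symm, hkl.symm, ha, hb, hd, he])
  rw [show ({i, j, k, l} : Finset ℕ) = insert i (insert j (insert k {l})) from rfl] at key
  simp only [Finset.prod_insert h1, Finset.prod_insert h2, Finset.prod_insert h3,
    Finset.prod_singleton] at key
  simp only [if_neg hij.symm, if_neg hik.symm, if_neg hil.symm, if_neg hjk.symm,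
    if_neg hjl.symm, if_neg hkl.symm, eq_self_iff_true, if_true] at key
  simp only [mul_assoc]
  exact key

lemma V2T_merge (x a b : ℝ) :
    (if x ≤ a then (1:ℝ) else 0) * (if x ≤ b then (1:ℝ) else 0)
      = if x ≤ min a b then (1:ℝ) else 0 := by
  by_cases h1 : x ≤ a <;> by_cases h2 : x ≤ b <;> simp [h1, h2, le_min_iff]

lemma V2T_min_mem {a b : ℝ} (ha : a ∈ Icc (0:ℝ) 1) (hb : b ∈ Icc (0:ℝ) 1) :
    min a b ∈ Icc (0:ℝ) 1 :=
  ⟨le_min ha.1 hb.1, (min_le_left a b).trans ha.2⟩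

include hU in
lemma V2T_integrable_ind2 (i j : ℕ) (a b : ℝ) :
    Integrable (fun ω => (if U i ω ≤ a then (1:ℝ) else 0)
      * (if U j ω ≤ b then (1:ℝ) else 0)) μ := by
  have heq : (fun ω => (if U i ω ≤ a then (1:ℝ) else 0) * (if U j ω ≤ b then (1:ℝ) else 0))
      = (U i ⁻¹' Iic a ∩ U j ⁻¹' Iic b).indicator (1 : Ω → ℝ) := by
    funext ω
    by_cases h1 : U i ω ≤ a <;> by_cases h2 : U j ω ≤ b <;>
      simp [Set.indicator_apply, Set.mem_inter_iff, Set.mem_preimage, Set.mem_Iic, h1, h2]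
  rw [heq]
  exact (integrable_const 1).indicator
    (((hU i) measurableSet_Iic).inter ((hU j) measurableSet_Iic))

include hU in
lemma V2T_integrable_ind4 (i j k l : ℕ) (a b d e : ℝ) :
    Integrable (fun ω => ((if U i ω ≤ a then (1:ℝ) else 0)
      * (if U j ω ≤ b then (1:ℝ) else 0))
      * ((if U k ω ≤ d then (1:ℝ) else 0) * (if U l ω ≤ e then (1:ℝ) else 0))) μ := by
  have heq : (fun ω => ((if U i ω ≤ a then (1:ℝ) else 0) * (if U j ω ≤ b then (1:ℝ) else 0))
      * ((if U k ω ≤ d then (1:ℝ) else 0) * (if U l ω ≤ e then (1:ℝ) else 0)))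
      = ((U i ⁻¹' Iic a ∩ U j ⁻¹' Iic b) ∩ (U k ⁻¹' Iic d ∩ U l ⁻¹' Iic e)).indicator
          (1 : Ω → ℝ) := by
    funext ω
    by_cases h1 : U i ω ≤ a <;> by_cases h2 : U j ω ≤ b <;> by_cases h3 : U k ω ≤ d <;>
      by_cases h4 : U l ω ≤ e <;>
      simp [Set.indicator_apply, Set.mem_inter_iff, Set.mem_preimage, Set.mem_Iic,
        h1, h2, h3, h4]
  rw [heq]
  exact (integrable_const 1).indicator
    ((((hU i) measurableSet_Iic).inter ((hU j) measurableSet_Iic)).inter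
      (((hU k) measurableSet_Iic).inter ((hU l) measurableSet_Iic)))

lemma V2T_split (A B : Ω → ℝ) (hA : Integrable A μ) (hB : Integrable B μ)
    (hAB : Integrable (fun ω => A ω * B ω) μ) (cA cB : ℝ)
    (hIA : ∫ ω, A ω ∂μ = cA) (hIB : ∫ ω, B ω ∂μ = cB) :
    ∫ ω, (A ω - cA) * (B ω - cB) ∂μ = (∫ ω, A ω * B ω ∂μ) - cA * cB := by
  have h1 : Integrable (fun ω => A ω * B ω - cB * A ω) μ := hAB.sub (hA.const_mul cB)
  have h2 : Integrable (fun ω => cA * B ω - cA * cB) μ :=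
    (hB.const_mul cA).sub (integrable_const _)
  rw [show (fun ω => (A ω - cA) * (B ω - cB))
      = fun ω => (A ω * B ω - cB * A ω) - (cA * B ω - cA * cB) from
    funext fun ω => by ring]
  rw [integral_sub h1 h2, integral_sub hAB (hA.const_mul cB),
    integral_sub (hB.const_mul cA) (integrable_const _),
    integral_const_mul, integral_const_mul, integral_const, hIA, hIB]
  simp [measure_univ]
  ring

include hU hindep hunif in
lemma V2T_key (n k l : ℕ) (hk1 : 2 ≤ k) (hk2 : k ≤ n) (hl1 : 2 ≤ l) (hl2 : l ≤ n)
    (r₁ r₂ s₁ s₂ : ℝ) (hr₁ : r₁ ∈ Icc (0:ℝ) 1) (hr₂ : r₂ ∈ Icc (0:ℝ) 1)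
    (hs₁ : s₁ ∈ Icc (0:ℝ) 1) (hs₂ : s₂ ∈ Icc (0:ℝ) 1) :
    ∫ ω, ((if U k ω ≤ r₁ then (1:ℝ) else 0) * (if U (k-1) ω ≤ r₂ then (1:ℝ) else 0)
          - r₁ * r₂)
        * ((if U l ω ≤ s₁ then (1:ℝ) else 0) * (if U (l-1) ω ≤ s₂ then (1:ℝ) else 0)
          - s₁ * s₂) ∂μ
      = (if l = k then min r₁ s₁ * min r₂ s₂
         else if l = k + 1 then min r₁ s₂ * r₂ * s₁
         else if l + 1 = k then min r₂ s₁ * r₁ * s₂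
         else r₁ * r₂ * s₁ * s₂) - r₁ * r₂ * s₁ * s₂ := by
  have intA := V2T_integrable_ind2 μ U hU k (k-1) r₁ r₂
  have intB := V2T_integrable_ind2 μ U hU l (l-1) s₁ s₂
  have intAB := V2T_integrable_ind4 μ U hU k (k-1) l (l-1) r₁ r₂ s₁ s₂
  have hsplit : ∫ ω, ((if U k ω ≤ r₁ then (1:ℝ) else 0)
        * (if U (k-1) ω ≤ r₂ then (1:ℝ) else 0) - r₁ * r₂)
      * ((if U l ω ≤ s₁ then (1:ℝ) else 0) * (if U (l-1) ω ≤ s₂ then (1:ℝ) else 0)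
        - s₁ * s₂) ∂μ
      = (∫ ω, ((if U k ω ≤ r₁ then (1:ℝ) else 0) * (if U (k-1) ω ≤ r₂ then (1:ℝ) else 0))
          * ((if U l ω ≤ s₁ then (1:ℝ) else 0) * (if U (l-1) ω ≤ s₂ then (1:ℝ) else 0)) ∂μ)
        - r₁ * r₂ * s₁ * s₂ := by
    have := V2T_split μ
      (fun ω => (if U k ω ≤ r₁ then (1:ℝ) else 0) * (if U (k-1) ω ≤ r₂ then (1:ℝ) else 0))
      (fun ω => (if U l ω ≤ s₁ then (1:ℝ) else 0) * (if U (l-1) ω ≤ s₂ then (1:ℝ) else 0))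
      intA intB intAB (r₁ * r₂) (s₁ * s₂)
      (V2T_E2 μ U hU hindep hunif k (k-1) (by omega) r₁ r₂ hr₁ hr₂)
      (V2T_E2 μ U hU hindep hunif l (l-1) (by omega) s₁ s₂ hs₁ hs₂)
    simpa [mul_assoc] using this
  rw [hsplit]
  congr 1
  by_cases h0 : l = k
  · subst h0
    rw [if_pos rfl]
    have hfun : (fun ω => ((if U l ω ≤ r₁ then (1:ℝ) else 0)
          * (if U (l-1) ω ≤ r₂ then (1:ℝ) else 0))
        * ((if U l ω ≤ s₁ then (1:ℝ) else 0) * (if U (l-1) ω ≤ s₂ then (1:ℝ) else 0)))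
        = fun ω => (if U l ω ≤ min r₁ s₁ then (1:ℝ) else 0)
          * (if U (l-1) ω ≤ min r₂ s₂ then (1:ℝ) else 0) := by
      funext ω
      rw [← V2T_merge (U l ω) r₁ s₁, ← V2T_merge (U (l-1) ω) r₂ s₂]
      ring
    rw [hfun]
    exact V2T_E2 μ U hU hindep hunif l (l-1) (by omega) _ _
      (V2T_min_mem hr₁ hs₁) (V2T_min_mem hr₂ hs₂)
  · rw [if_neg h0]
    by_cases h1 : l = k + 1
    · subst h1
      rw [if_pos rfl]
      simp only [Nat.add_sub_cancel]
      rw [show (fun ω => ((if U k ω ≤ r₁ then (1:ℝ) else 0)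
            * (if U (k-1) ω ≤ r₂ then (1:ℝ) else 0))
          * ((if U (k+1) ω ≤ s₁ then (1:ℝ) else 0) * (if U k ω ≤ s₂ then (1:ℝ) else 0)))
          = fun ω => (if U k ω ≤ min r₁ s₂ then (1:ℝ) else 0)
            * (if U (k-1) ω ≤ r₂ then (1:ℝ) else 0)
            * (if U (k+1) ω ≤ s₁ then (1:ℝ) else 0) from by
        funext ω
        rw [← V2T_merge (U k ω) r₁ s₂]
        ring]
      exact V2T_E3 μ U hU hindep hunif k (k-1) (k+1) (by omega) (by omega) (by omega)
        _ r₂ s₁ (V2T_min_mem hr₁ hs₂) hr₂ hs₁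
    · rw [if_neg h1]
      by_cases h2 : l + 1 = k
      · subst h2
        rw [if_pos rfl]
        simp only [Nat.add_sub_cancel]
        rw [show (fun ω => ((if U (l+1) ω ≤ r₁ then (1:ℝ) else 0)
              * (if U l ω ≤ r₂ then (1:ℝ) else 0))
            * ((if U l ω ≤ s₁ then (1:ℝ) else 0) * (if U (l-1) ω ≤ s₂ then (1:ℝ) else 0)))
            = fun ω => (if U (l+1) ω ≤ r₁ then (1:ℝ) else 0)
              * (if U l ω ≤ min r₂ s₁ then (1:ℝ) else 0)
              * (if U (l-1) ω ≤ s₂ then (1:ℝ) else 0) from by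
          funext ω
          rw [← V2T_merge (U l ω) r₂ s₁]
          ring]
        rw [V2T_E3 μ U hU hindep hunif (l+1) l (l-1) (by omega) (by omega) (by omega)
          r₁ _ s₂ hr₁ (V2T_min_mem hr₂ hs₁) hs₂]
        ring
      · rw [if_neg h2]
        rw [show (fun ω => ((if U k ω ≤ r₁ then (1:ℝ) else 0)
              * (if U (k-1) ω ≤ r₂ then (1:ℝ) else 0))
            * ((if U l ω ≤ s₁ then (1:ℝ) else 0) * (if U (l-1) ω ≤ s₂ then (1:ℝ) else 0)))
            = fun ω => (if U k ω ≤ r₁ then (1:ℝ) else 0)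
              * (if U (k-1) ω ≤ r₂ then (1:ℝ) else 0)
              * (if U l ω ≤ s₁ then (1:ℝ) else 0)
              * (if U (l-1) ω ≤ s₂ then (1:ℝ) else 0) from by
          funext ω; ring]
        exact V2T_E4 μ U hU hindep hunif k (k-1) l (l-1) (by omega) (by omega) (by omega)
          (by omega) (by omega) (by omega) r₁ r₂ s₁ s₂ hr₁ hr₂ hs₁ hs₂

include hU in
lemma V2T_integrable_XY (k l : ℕ) (r₁ r₂ s₁ s₂ : ℝ) :
    Integrable (fun ω => ((if U k ω ≤ r₁ then (1:ℝ) else 0)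
        * (if U (k-1) ω ≤ r₂ then (1:ℝ) else 0) - r₁ * r₂)
      * ((if U l ω ≤ s₁ then (1:ℝ) else 0) * (if U (l-1) ω ≤ s₂ then (1:ℝ) else 0)
        - s₁ * s₂)) μ := by
  have heq : (fun ω => ((if U k ω ≤ r₁ then (1:ℝ) else 0)
        * (if U (k-1) ω ≤ r₂ then (1:ℝ) else 0) - r₁ * r₂)
      * ((if U l ω ≤ s₁ then (1:ℝ) else 0) * (if U (l-1) ω ≤ s₂ then (1:ℝ) else 0)
        - s₁ * s₂))
      = fun ω => (((if U k ω ≤ r₁ then (1:ℝ) else 0)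
          * (if U (k-1) ω ≤ r₂ then (1:ℝ) else 0))
        * ((if U l ω ≤ s₁ then (1:ℝ) else 0) * (if U (l-1) ω ≤ s₂ then (1:ℝ) else 0))
        - (s₁ * s₂) * ((if U k ω ≤ r₁ then (1:ℝ) else 0)
          * (if U (k-1) ω ≤ r₂ then (1:ℝ) else 0)))
        - ((r₁ * r₂) * ((if U l ω ≤ s₁ then (1:ℝ) else 0)
          * (if U (l-1) ω ≤ s₂ then (1:ℝ) else 0)) - (r₁ * r₂) * (s₁ * s₂)) := by
    funext ω; ring
  rw [heq]
  exact ((V2T_integrable_ind4 μ U hU k (k-1) l (l-1) r₁ r₂ s₁ s₂).sub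
      ((V2T_integrable_ind2 μ U hU k (k-1) r₁ r₂).const_mul _)).sub
    (((V2T_integrable_ind2 μ U hU l (l-1) s₁ s₂).const_mul _).sub (integrable_const _))

end V2TAux

theorem V2T_covariance {Ω : Type*} [MeasurableSpace Ω] (μ : Measure Ω)
    [IsProbabilityMeasure μ]
    (U : ℕ → Ω → ℝ) (hU : ∀ k, Measurable (U k))
    (hindep : iIndepFun U μ)
    (hunif : ∀ k, Measure.map (U k) μ = volume.restrict (Set.Icc (0:ℝ) 1))
    (n : ℕ) (hn : 2 ≤ n)
    (r₁ r₂ s₁ s₂ : ℝ) (hr₁ : r₁ ∈ Set.Icc (0:ℝ) 1) (hr₂ : r₂ ∈ Set.Icc (0:ℝ) 1)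
    (hs₁ : s₁ ∈ Set.Icc (0:ℝ) 1) (hs₂ : s₂ ∈ Set.Icc (0:ℝ) 1)
    (V : ℝ → ℝ → Ω → ℝ)
    (hV : ∀ a b ω, V a b ω = (1 / Real.sqrt ((n:ℝ) - 1)) *
      ∑ k ∈ Finset.Icc 2 n,
        ((if U k ω ≤ a then (1:ℝ) else 0) * (if U (k-1) ω ≤ b then (1:ℝ) else 0) - a * b)) :
    ∫ ω, V r₁ r₂ ω * V s₁ s₂ ω ∂μ
      = min r₁ s₁ * min r₂ s₂
        + (((n:ℝ) - 2) / ((n:ℝ) - 1)) * (min r₁ s₂ * r₂ * s₁ + min r₂ s₁ * r₁ * s₂)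
        - (1 + 2 * ((n:ℝ) - 2) / ((n:ℝ) - 1)) * (r₁ * r₂ * s₁ * s₂) := by
  classical
  set c : ℝ := 1 / Real.sqrt ((n:ℝ) - 1) with hc
  set X : ℝ → ℝ → ℕ → Ω → ℝ := fun a b k ω =>
    (if U k ω ≤ a then (1:ℝ) else 0) * (if U (k-1) ω ≤ b then (1:ℝ) else 0) - a * b with hX
  set q₀ : ℝ := min r₁ s₁ * min r₂ s₂ with hq₀
  set q₁ : ℝ := min r₁ s₂ * r₂ * s₁ with hq₁
  set q₂ : ℝ := min r₂ s₁ * r₁ * s₂ with hq₂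
  set p : ℝ := r₁ * r₂ * s₁ * s₂ with hp
  have hrw : (fun ω => V r₁ r₂ ω * V s₁ s₂ ω)
      = fun ω => (c * c) * ∑ k ∈ Finset.Icc 2 n, ∑ l ∈ Finset.Icc 2 n,
          X r₁ r₂ k ω * X s₁ s₂ l ω := by
    funext ω
    rw [hV, hV, mul_mul_mul_comm, Finset.sum_mul_sum]
  rw [hrw, integral_const_mul,
    integral_finset_sum _ (fun k _ => integrable_finset_sum _
      (fun l _ => V2T_integrable_XY μ U hU k l r₁ r₂ s₁ s₂))]
  have hinner : ∀ k ∈ Finset.Icc 2 n,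
      ∫ ω, ∑ l ∈ Finset.Icc 2 n, X r₁ r₂ k ω * X s₁ s₂ l ω ∂μ
        = ∑ l ∈ Finset.Icc 2 n,
            ((if l = k then q₀ else if l = k + 1 then q₁ else if l + 1 = k then q₂ else p)
              - p) := by
    intro k hk
    rw [Finset.mem_Icc] at hk
    rw [integral_finset_sum _ (fun l _ => V2T_integrable_XY μ U hU k l r₁ r₂ s₁ s₂)]
    refine Finset.sum_congr rfl fun l hl => ?_
    rw [Finset.mem_Icc] at hl
    exact V2T_key μ U hU hindep hunif n k l hk.1 hk.2 hl.1 hl.2 r₁ r₂ s₁ s₂ hr₁ hr₂ hs₁ hs₂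
  rw [Finset.sum_congr rfl hinner]
  have hsum : ∑ k ∈ Finset.Icc 2 n, ∑ l ∈ Finset.Icc 2 n,
      ((if l = k then q₀ else if l = k + 1 then q₁ else if l + 1 = k then q₂ else p) - p)
      = ((n:ℝ) - 1) * (q₀ - p) + ((n:ℝ) - 2) * (q₁ - p) + ((n:ℝ) - 2) * (q₂ - p) := by
    have hstep : ∀ k ∈ Finset.Icc 2 n, ∑ l ∈ Finset.Icc 2 n,
        ((if l = k then q₀ else if l = k + 1 then q₁ else if l + 1 = k then q₂ else p) - p)
        = (q₀ - p) + (if k + 1 ≤ n then q₁ - p else 0)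
          + (if 3 ≤ k then q₂ - p else 0) := by
      intro k hk
      rw [Finset.mem_Icc] at hk
      have hpt : ∀ l ∈ Finset.Icc 2 n,
          ((if l = k then q₀ else if l = k + 1 then q₁ else if l + 1 = k then q₂ else p) - p)
          = (if l = k then q₀ - p else 0) + (if l = k + 1 then q₁ - p else 0)
            + (if l = k - 1 then q₂ - p else 0) := by
        intro l hl
        rw [Finset.mem_Icc] at hl
        split_ifs <;> first | ring1 | (exfalso; omega)
      rw [Finset.sum_congr rfl hpt]
      rw [Finset.sum_add_distrib, Finset.sum_add_distrib,
        Finset.sum_ite_eq' (Finset.Icc 2 n) k (fun _ => q₀ - p),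
        Finset.sum_ite_eq' (Finset.Icc 2 n) (k+1) (fun _ => q₁ - p),
        Finset.sum_ite_eq' (Finset.Icc 2 n) (k-1) (fun _ => q₂ - p)]
      congr 1
      · congr 1
        · rw [if_pos (by rw [Finset.mem_Icc]; omega)]
        · by_cases h : k + 1 ≤ n
          · rw [if_pos (by rw [Finset.mem_Icc]; omega), if_pos h]
          · rw [if_neg (by rw [Finset.mem_Icc]; omega), if_neg h]
      · by_cases h : 3 ≤ k
        · rw [if_pos (by rw [Finset.mem_Icc]; omega), if_pos h]
        · rw [if_neg (by rw [Finset.mem_Icc]; omega), if_neg h]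
    rw [Finset.sum_congr rfl hstep]
    rw [Finset.sum_add_distrib, Finset.sum_add_distrib, Finset.sum_const]
    have h1 : ∑ k ∈ Finset.Icc 2 n, (if k + 1 ≤ n then q₁ - p else 0)
        = ((n:ℝ) - 2) * (q₁ - p) := by
      rw [← Finset.sum_filter]
      rw [show (Finset.Icc 2 n).filter (fun k => k + 1 ≤ n) = Finset.Icc 2 (n-1) from by
        ext x; simp only [Finset.mem_filter, Finset.mem_Icc]; omega]
      rw [Finset.sum_const, Nat.card_Icc]
      have : n - 1 + 1 - 2 = n - 2 := by omega
      rw [this, nsmul_eq_mul, Nat.cast_sub hn]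
      norm_num
    have h2 : ∑ k ∈ Finset.Icc 2 n, (if 3 ≤ k then q₂ - p else 0)
        = ((n:ℝ) - 2) * (q₂ - p) := by
      rw [← Finset.sum_filter]
      rw [show (Finset.Icc 2 n).filter (fun k => 3 ≤ k) = Finset.Icc 3 n from by
        ext x; simp only [Finset.mem_filter, Finset.mem_Icc]; omega]
      rw [Finset.sum_const, Nat.card_Icc]
      have : n + 1 - 3 = n - 2 := by omega
      rw [this, nsmul_eq_mul, Nat.cast_sub hn]
      norm_num
    rw [h1, h2, Nat.card_Icc, nsmul_eq_mul]
    have : n + 1 - 2 = n - 1 := by omega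
    rw [this, Nat.cast_sub (by omega : 1 ≤ n)]
    norm_num
  rw [hsum]
  have hcc : c * c = 1 / ((n:ℝ) - 1) := by
    rw [hc, div_mul_div_comm, one_mul,
      Real.mul_self_sqrt (by
        have : (2:ℝ) ≤ (n:ℝ) := by exact_mod_cast hn
        linarith)]
  rw [hcc]
  have hne : (n:ℝ) - 1 ≠ 0 := by
    have : (2:ℝ) ≤ (n:ℝ) := by exact_mod_cast hn
    intro h; linarith [sub_eq_zero.mp h]
  field_simp
  ring
end

section
/- Let Y be a random vector in ℝ^d with continuous joint distribution, whose joint CDF factorizes as F(y₁,…,y_d) = F₁(y₁)·F₂(y₂|y₁)⋯F_d(y_d|y₁,…,y_{d−1}), where each conditional CDF F_ℓ(·|y₁,…,y_{ℓ−1}) is continuous and strictly increasing. Then the random variables U_ℓ = F_ℓ(Y_ℓ | Y₁, …, Y_{ℓ−1}), ℓ = 1, …, d, are mutually independent and each uniformly distributed on [0,1]. -/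
open MeasureTheory ProbabilityTheory Set Filter Topology
set_option linter.unusedSectionVars false
set_option linter.unusedVariables false
set_option maxHeartbeats 1000000


open MeasureTheory ProbabilityTheory Set Filter Topology

noncomputable def dyU (n : ℕ) (x : ℝ) : ℚ := (⌈x * 2^n⌉ : ℚ) / 2^n
noncomputable def dyD (n : ℕ) (x : ℝ) : ℚ := ((⌈x * 2^n⌉ : ℚ) - 1) / 2^n

lemma dyU_cast (n : ℕ) (x : ℝ) : ((dyU n x : ℚ) : ℝ) = (⌈x * 2^n⌉ : ℝ) / 2^n := by
  unfold dyU; push_cast; ring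

lemma dyD_cast (n : ℕ) (x : ℝ) : ((dyD n x : ℚ) : ℝ) = ((⌈x * 2^n⌉ : ℝ) - 1) / 2^n := by
  unfold dyD; push_cast; ring

lemma le_dyU (n : ℕ) (x : ℝ) : x ≤ dyU n x := by
  rw [dyU_cast, le_div_iff₀ (by positivity)]
  exact Int.le_ceil _

lemma dyU_le (n : ℕ) (x : ℝ) : (dyU n x : ℝ) ≤ x + (1/2)^n := by
  rw [dyU_cast, div_le_iff₀ (by positivity)]
  have := (Int.ceil_lt_add_one (x * 2^n)).le
  calc ((⌈x * 2^n⌉ : ℝ)) ≤ x * 2^n + 1 := this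
  _ = (x + (1/2)^n) * 2^n := by ring_nf; rw [one_div, inv_pow, inv_mul_cancel₀ (by positivity)]; ring

lemma dyD_lt (n : ℕ) (x : ℝ) : (dyD n x : ℝ) < x := by
  rw [dyD_cast, div_lt_iff₀ (by positivity), sub_lt_iff_lt_add]
  exact Int.ceil_lt_add_one _

lemma lt_dyD_add (n : ℕ) (x : ℝ) : x - (1/2)^n ≤ dyD n x := by
  rw [dyD_cast, le_div_iff₀ (by positivity)]
  have := Int.le_ceil (x * 2^n)
  have h2 : ((1:ℝ)/2)^n * 2^n = 1 := by
    rw [one_div, inv_pow, inv_mul_cancel₀ (by positivity)]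
  nlinarith [pow_pos (by norm_num : (0:ℝ) < 2) n]

lemma tendsto_dyU (x : ℝ) : Tendsto (fun n => (dyU n x : ℝ)) atTop (𝓝 x) := by
  have h1 : Tendsto (fun n : ℕ => x + (1/2:ℝ)^n) atTop (𝓝 (x + 0)) :=
    tendsto_const_nhds.add (tendsto_pow_atTop_nhds_zero_of_lt_one (by norm_num) (by norm_num))
  rw [add_zero] at h1
  exact tendsto_of_tendsto_of_tendsto_of_le_of_le tendsto_const_nhds h1
    (fun n => le_dyU n x) (fun n => dyU_le n x)

lemma tendsto_dyD (x : ℝ) : Tendsto (fun n => (dyD n x : ℝ)) atTop (𝓝 x) := by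
  have h1 : Tendsto (fun n : ℕ => x - (1/2:ℝ)^n) atTop (𝓝 (x - 0)) :=
    tendsto_const_nhds.sub (tendsto_pow_atTop_nhds_zero_of_lt_one (by norm_num) (by norm_num))
  rw [sub_zero] at h1
  exact tendsto_of_tendsto_of_tendsto_of_le_of_le h1 tendsto_const_nhds
    (fun n => lt_dyD_add n x) (fun n => (dyD_lt n x).le)

lemma measurable_dyU (n : ℕ) : Measurable (dyU n) := by
  have : dyU n = (fun k : ℤ => ((k:ℚ)/2^n)) ∘ (fun x : ℝ => ⌈x * 2^n⌉) := rfl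
  rw [this]
  exact measurable_from_top.comp (Int.measurable_ceil.comp (measurable_id.mul_const _))

lemma measurable_dyD (n : ℕ) : Measurable (dyD n) := by
  have : dyD n = (fun k : ℤ => (((k:ℚ)-1)/2^n)) ∘ (fun x : ℝ => ⌈x * 2^n⌉) := rfl
  rw [this]
  exact measurable_from_top.comp (Int.measurable_ceil.comp (measurable_id.mul_const _))


def IsGood (G : ℝ → ℝ) : Prop :=
  Continuous G ∧ StrictMono G ∧ (∀ z, G z ∈ Ioo (0:ℝ) 1) ∧
    Tendsto G atTop (𝓝 1) ∧ Tendsto G atBot (𝓝 0)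

lemma IsGood.exists_eq {G : ℝ → ℝ} (hG : IsGood G) {t : ℝ} (h0 : 0 < t) (h1 : t < 1) :
    ∃ z, G z = t := by
  obtain ⟨hc, hm, hb, hT, hB⟩ := hG
  have h1' : ∀ᶠ z in atTop, t < G z := hT.eventually (eventually_gt_nhds h1)
  have h0' : ∀ᶠ z in atBot, G z < t := hB.eventually (eventually_lt_nhds h0)
  obtain ⟨b, hbt⟩ := h1'.exists
  obtain ⟨a, hat⟩ := h0'.exists
  have : t ∈ uIcc (G a) (G b) := by
    rw [mem_uIcc]; left; exact ⟨hat.le, hbt.le⟩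
  obtain ⟨z, _, hz⟩ := intermediate_value_uIcc hc.continuousOn this
  exact ⟨z, hz⟩

/-- the measurable quantile formula -/
noncomputable def quant (G : ℝ → ℝ) (t : ℝ) : ℝ :=
  Real.tan (⨆ q : ℚ, if G q ≤ t then Real.arctan q else -2)

lemma IsGood.quant_eq {G : ℝ → ℝ} (hG : IsGood G) {t z : ℝ} (hz : G z = t) :
    quant G t = z := by
  have hm := hG.2.1
  have hbdd : BddAbove (range fun q : ℚ => if G q ≤ t then Real.arctan q else -2) := by
    refine ⟨Real.pi/2, ?_⟩
    rintro x ⟨q, rfl⟩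
    dsimp only
    split_ifs
    · exact (Real.arctan_lt_pi_div_two _).le
    · nlinarith [Real.pi_gt_three]
  have key : (⨆ q : ℚ, if G q ≤ t then Real.arctan q else -2) = Real.arctan z := by
    apply le_antisymm
    · apply ciSup_le
      intro q
      split_ifs with h
      · exact Real.arctan_strictMono.monotone (by
          rw [← hz] at h; exact (hm.le_iff_le).mp h)
      · nlinarith [Real.neg_pi_div_two_lt_arctan z, Real.pi_lt_d2]
    · -- approximate z from below by rationals
      have hseq : ∀ n : ℕ, ∃ q : ℚ, z - (1/(n+1):ℝ) < q ∧ (q:ℝ) < z := by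
        intro n
        apply exists_rat_btwn
        have : (0:ℝ) < 1/(n+1) := by positivity
        linarith
      choose qs hqs1 hqs2 using hseq
      have htend : Tendsto (fun n => ((qs n : ℝ))) atTop (𝓝 z) := by
        have hlow : Tendsto (fun n : ℕ => z - (1/(n+1):ℝ)) atTop (𝓝 (z - 0)) :=
          tendsto_const_nhds.sub tendsto_one_div_add_atTop_nhds_zero_nat
        rw [sub_zero] at hlow
        exact tendsto_of_tendsto_of_tendsto_of_le_of_le hlow tendsto_const_nhds
          (fun n => (hqs1 n).le) (fun n => (hqs2 n).le)
      have harc : Tendsto (fun n => Real.arctan (qs n)) atTop (𝓝 (Real.arctan z)) :=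
        (Real.continuous_arctan.tendsto z).comp htend
      refine le_of_tendsto harc (Eventually.of_forall fun n => ?_)
      have hle : G (qs n) ≤ t := by rw [← hz]; exact (hm (hqs2 n)).le
      calc Real.arctan (qs n) = if G (qs n) ≤ t then Real.arctan (qs n) else -2 := by
            rw [if_pos hle]
      _ ≤ _ := le_ciSup hbdd (qs n)
  rw [quant, key, Real.tan_arctan]

lemma measurable_quant_comp {Ω : Type*} {m' : MeasurableSpace Ω} {G : Ω → ℝ → ℝ} {t : ℝ}
    (hG : ∀ z : ℝ, Measurable[m'] (fun ω => G ω z)) :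
    Measurable[m'] (fun ω => quant (G ω) t) := by
  have htan : Measurable Real.tan := by
    have : Real.tan = fun x => Real.sin x / Real.cos x := funext Real.tan_eq_sin_div_cos
    rw [this]
    exact Real.continuous_sin.measurable.div Real.continuous_cos.measurable
  apply htan.comp
  apply Measurable.iSup
  intro q
  exact Measurable.ite (measurableSet_le (hG q) measurable_const) measurable_const
    measurable_const

section Core
variable {Ω : Type*} [mΩ : MeasurableSpace Ω] {μ : Measure Ω} [IsProbabilityMeasure μ]
  {d : ℕ} {Y : Ω → Fin d → ℝ} {F : Fin d → Ω → ℝ → ℝ}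

def past (Y : Ω → Fin d → ℝ) (ℓ : Fin d) : MeasurableSpace Ω :=
  ⨆ j < ℓ, MeasurableSpace.comap (fun ω => Y ω j) inferInstance

variable (μ) in
def condhyp (Y : Ω → Fin d → ℝ) (F : Fin d → Ω → ℝ → ℝ) : Prop :=
  ∀ (ℓ : Fin d) (z : ℝ),
      (fun ω => F ℓ ω z) =ᵐ[μ]
        μ[Set.indicator {ω | Y ω ℓ ≤ z} (fun _ => (1:ℝ)) | past Y ℓ]



lemma past_le (hY : Measurable Y) (ℓ : Fin d) : past Y ℓ ≤ mΩ :=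
  iSup₂_le fun j _ => ((measurable_pi_apply j).comp hY).comap_le

lemma comap_le_past {j ℓ : Fin d} (h : j < ℓ) :
    MeasurableSpace.comap (fun ω => Y ω j) inferInstance ≤ past Y ℓ :=
  le_iSup₂ (f := fun (j : Fin d) (_ : j < ℓ) =>
    MeasurableSpace.comap (fun ω => Y ω j) inferInstance) j h

lemma past_mono {ℓ m : Fin d} (h : ℓ ≤ m) : past Y ℓ ≤ past Y m :=
  iSup₂_le fun j hj => comap_le_past (lt_of_lt_of_le hj h)

lemma measurableSet_Yle (hY : Measurable Y) (ℓ : Fin d) (z : ℝ) :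
    MeasurableSet {ω | Y ω ℓ ≤ z} :=
  measurableSet_le ((measurable_pi_apply ℓ).comp hY) measurable_const

lemma integrable_ind (hY : Measurable Y) (ℓ : Fin d) (z : ℝ) :
    Integrable (Set.indicator {ω | Y ω ℓ ≤ z} (fun _ => (1:ℝ))) μ :=
  (integrable_const (1:ℝ)).indicator (measurableSet_Yle hY ℓ z)

lemma integrable_F (hcond : condhyp μ Y F) (ℓ : Fin d) (z : ℝ) :
    Integrable (fun ω => F ℓ ω z) μ :=
  integrable_condExp.congr (hcond ℓ z).symm

lemma setIntegral_F (hY : Measurable Y) (hcond : condhyp μ Y F) (ℓ : Fin d) (z : ℝ)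
    {A : Set Ω} (hA : MeasurableSet[past Y ℓ] A) :
    ∫ ω in A, F ℓ ω z ∂μ = (μ ({ω | Y ω ℓ ≤ z} ∩ A)).toReal := by
  have hle := past_le hY ℓ
  have hAm : MeasurableSet A := hle _ hA
  have hS := measurableSet_Yle hY ℓ z
  calc ∫ ω in A, F ℓ ω z ∂μ
      = ∫ ω in A, (μ[Set.indicator {ω | Y ω ℓ ≤ z} (fun _ => (1:ℝ)) | past Y ℓ]) ω ∂μ := by
        apply setIntegral_congr_ae hAm
        filter_upwards [hcond ℓ z] with ω h _
        exact h
    _ = ∫ ω in A, Set.indicator {ω | Y ω ℓ ≤ z} (fun _ => (1:ℝ)) ω ∂μ :=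
        setIntegral_condExp hle (integrable_ind hY ℓ z) hA
    _ = ∫ _ω in A ∩ {ω | Y ω ℓ ≤ z}, (1:ℝ) ∂μ := setIntegral_indicator hS
    _ = (μ ({ω | Y ω ℓ ≤ z} ∩ A)).toReal := by
        rw [setIntegral_const, smul_eq_mul, mul_one, inter_comm]; rfl


lemma ae_icc (hY : Measurable Y) (hcond : condhyp μ Y F) (ℓ : Fin d) (z : ℝ) :
    ∀ᵐ ω ∂μ, F ℓ ω z ∈ Icc (0:ℝ) 1 := by
  have hle := past_le hY ℓ
  have h0 : 0 ≤ᵐ[μ] μ[Set.indicator {ω | Y ω ℓ ≤ z} (fun _ => (1:ℝ)) | past Y ℓ] :=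
    condExp_nonneg (Eventually.of_forall fun ω => Set.indicator_nonneg (fun _ _ => zero_le_one) _)
  have h1 : μ[Set.indicator {ω | Y ω ℓ ≤ z} (fun _ => (1:ℝ)) | past Y ℓ]
      ≤ᵐ[μ] μ[(fun _ => (1:ℝ)) | past Y ℓ] :=
    condExp_mono (integrable_ind hY ℓ z) (integrable_const 1)
      (Eventually.of_forall fun ω => Set.indicator_le_self' (fun _ _ => zero_le_one) ω)
  rw [condExp_const hle] at h1
  filter_upwards [hcond ℓ z, h0, h1] with ω he h0 h1
  rw [he]
  exact ⟨h0, h1⟩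

lemma mu_top_zero (hY : Measurable Y) (hcond : condhyp μ Y F)
    (hmeas : ∀ (ℓ : Fin d) (z : ℝ), Measurable[past Y ℓ] (fun ω => F ℓ ω z))
    (ℓ : Fin d) (k : ℕ) :
    μ {ω | ∀ n : ℕ, F ℓ ω n ≤ 1 - 1/((k:ℝ)+1)} = 0 := by
  have hle := past_le hY ℓ
  rw [show {ω | ∀ n : ℕ, F ℓ ω n ≤ 1 - 1/((k:ℝ)+1)}
      = ⋂ n : ℕ, {ω | F ℓ ω n ≤ 1 - 1/((k:ℝ)+1)} from by ext ω; simp]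
  set ε : ℝ := 1/((k:ℝ)+1) with hε
  have hεpos : 0 < ε := by positivity
  set A : Set Ω := ⋂ n : ℕ, {ω | F ℓ ω n ≤ 1 - ε} with hA
  have hAG : MeasurableSet[past Y ℓ] A :=
    MeasurableSet.iInter fun n => measurableSet_le (hmeas ℓ n) measurable_const
  have hAm : MeasurableSet A := hle _ hAG
  have hbound : ∀ n : ℕ, (μ ({ω | Y ω ℓ ≤ (n:ℝ)} ∩ A)).toReal ≤ (1-ε) * (μ A).toReal := by
    intro n
    rw [← setIntegral_F hY hcond ℓ n hAG]
    calc ∫ ω in A, F ℓ ω n ∂μ ≤ ∫ _ω in A, (1-ε) ∂μ := by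
          apply setIntegral_mono_on ((integrable_F hcond ℓ n).integrableOn)
            (integrableOn_const (measure_lt_top μ A).ne) hAm
          intro ω hω
          exact mem_iInter.mp hω n
      _ = (1-ε) * (μ A).toReal := by rw [setIntegral_const, smul_eq_mul, mul_comm]; rfl
  have hmono : Monotone (fun n : ℕ => {ω | Y ω ℓ ≤ (n:ℝ)} ∩ A) := by
    intro n m hnm
    apply inter_subset_inter_left
    intro ω hω
    simp only [mem_setOf_eq] at *
    have h2 : (n:ℝ) ≤ m := by exact_mod_cast hnm
    linarith
  have hUnion : ⋃ n : ℕ, ({ω | Y ω ℓ ≤ (n:ℝ)} ∩ A) = A := by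
    ext ω
    simp only [mem_iUnion, mem_inter_iff, mem_setOf_eq]
    constructor
    · rintro ⟨n, _, h⟩; exact h
    · intro h
      obtain ⟨n, hn⟩ := exists_nat_ge (Y ω ℓ)
      exact ⟨n, hn, h⟩
  have hlim : Tendsto (fun n : ℕ => μ ({ω | Y ω ℓ ≤ (n:ℝ)} ∩ A)) atTop (𝓝 (μ A)) := by
    have := tendsto_measure_iUnion_atTop (μ := μ) hmono
    rwa [hUnion] at this
  have hlim' : Tendsto (fun n : ℕ => (μ ({ω | Y ω ℓ ≤ (n:ℝ)} ∩ A)).toReal) atTop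
      (𝓝 (μ A).toReal) := (ENNReal.tendsto_toReal (measure_ne_top μ A)).comp hlim
  have hfin : (μ A).toReal ≤ (1-ε) * (μ A).toReal :=
    le_of_tendsto hlim' (Eventually.of_forall hbound)
  have htr : (μ A).toReal = 0 := by nlinarith [ENNReal.toReal_nonneg (a := μ A)]
  exact ((ENNReal.toReal_eq_zero_iff _).mp htr).resolve_right (measure_ne_top μ A)

lemma mu_bot_zero (hY : Measurable Y) (hcond : condhyp μ Y F)
    (hmeas : ∀ (ℓ : Fin d) (z : ℝ), Measurable[past Y ℓ] (fun ω => F ℓ ω z))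
    (ℓ : Fin d) (k : ℕ) :
    μ {ω | ∀ n : ℕ, 1/((k:ℝ)+1) ≤ F ℓ ω (-(n:ℝ))} = 0 := by
  have hle := past_le hY ℓ
  rw [show {ω | ∀ n : ℕ, 1/((k:ℝ)+1) ≤ F ℓ ω (-(n:ℝ))}
      = ⋂ n : ℕ, {ω | 1/((k:ℝ)+1) ≤ F ℓ ω (-(n:ℝ))} from by ext ω; simp]
  set ε : ℝ := 1/((k:ℝ)+1) with hε
  have hεpos : 0 < ε := by positivity
  set B : Set Ω := ⋂ n : ℕ, {ω | ε ≤ F ℓ ω (-(n:ℝ))} with hB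
  have hBG : MeasurableSet[past Y ℓ] B :=
    MeasurableSet.iInter fun n => measurableSet_le measurable_const (hmeas ℓ (-(n:ℝ)))
  have hBm : MeasurableSet B := hle _ hBG
  have hbound : ∀ n : ℕ, ε * (μ B).toReal ≤ (μ {ω | Y ω ℓ ≤ -(n:ℝ)}).toReal := by
    intro n
    have h1 : ε * (μ B).toReal ≤ ∫ ω in B, F ℓ ω (-(n:ℝ)) ∂μ := by
      have : ∫ _ω in B, ε ∂μ ≤ ∫ ω in B, F ℓ ω (-(n:ℝ)) ∂μ := by
        apply setIntegral_mono_on (integrableOn_const (measure_lt_top μ B).ne)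
          ((integrable_F hcond ℓ _).integrableOn) hBm
        intro ω hω
        exact mem_iInter.mp hω n
      rwa [setIntegral_const, smul_eq_mul, mul_comm] at this
    have h2 := setIntegral_F hY hcond ℓ (-(n:ℝ)) hBG
    rw [h2] at h1
    exact h1.trans (ENNReal.toReal_mono (measure_ne_top μ _) (measure_mono inter_subset_left))
  have hInter : ⋂ n : ℕ, {ω | Y ω ℓ ≤ -(n:ℝ)} = (∅ : Set Ω) := by
    ext ω
    simp only [mem_iInter, mem_setOf_eq, mem_empty_iff_false, iff_false, not_forall]
    obtain ⟨n, hn⟩ := exists_nat_gt (-(Y ω ℓ))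
    exact ⟨n, by push_neg; linarith⟩
  have hanti : Antitone (fun n : ℕ => {ω | Y ω ℓ ≤ -(n:ℝ)}) := by
    intro n m hnm ω hω
    simp only [mem_setOf_eq] at *
    have : (n:ℝ) ≤ m := by exact_mod_cast hnm
    linarith
  have hlim : Tendsto (fun n : ℕ => μ {ω | Y ω ℓ ≤ -(n:ℝ)}) atTop (𝓝 0) := by
    have := tendsto_measure_iInter_atTop (μ := μ) (s := fun n : ℕ => {ω | Y ω ℓ ≤ -(n:ℝ)})
      (fun n => (measurableSet_Yle hY ℓ (-(n:ℝ))).nullMeasurableSet) hanti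
      ⟨0, measure_ne_top μ _⟩
    rwa [hInter, measure_empty] at this
  have hlim' : Tendsto (fun n : ℕ => (μ {ω | Y ω ℓ ≤ -(n:ℝ)}).toReal) atTop (𝓝 0) := by
    have := (ENNReal.tendsto_toReal ENNReal.zero_ne_top).comp hlim
    simpa [Function.comp_def] using this
  have hfin : ε * (μ B).toReal ≤ 0 := le_of_tendsto_of_tendsto' tendsto_const_nhds hlim' hbound
  have htr : (μ B).toReal = 0 := by nlinarith [ENNReal.toReal_nonneg (a := μ B)]
  exact ((ENNReal.toReal_eq_zero_iff _).mp htr).resolve_right (measure_ne_top μ B)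
end Core

section Core2
variable {Ω : Type*} [mΩ : MeasurableSpace Ω] {μ : Measure Ω} [IsProbabilityMeasure μ]
  {d : ℕ} {Y : Ω → Fin d → ℝ} {F : Fin d → Ω → ℝ → ℝ}

lemma ae_good (hY : Measurable Y) (hcond : condhyp μ Y F)
    (hmeas : ∀ (ℓ : Fin d) (z : ℝ), Measurable[past Y ℓ] (fun ω => F ℓ ω z))
    (hcont : ∀ ℓ : Fin d, ∀ᵐ ω ∂μ, Continuous (F ℓ ω) ∧ StrictMono (F ℓ ω))
    (ℓ : Fin d) : ∀ᵐ ω ∂μ, IsGood (F ℓ ω) := by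
  have hmeas' : ∀ (ℓ : Fin d) (z : ℝ), Measurable (fun ω => F ℓ ω z) :=
    fun ℓ z => (hmeas ℓ z).mono (past_le hY ℓ) le_rfl
  have hq' : ∀ᵐ ω ∂μ, ∀ q : ℚ, F ℓ ω q ∈ Icc (0:ℝ) 1 :=
    ae_all_iff.mpr fun q => ae_icc hY hcond ℓ q
  have hTz : ∀ᵐ ω ∂μ, ∀ k : ℕ, ¬ (∀ n : ℕ, F ℓ ω n ≤ 1 - 1/((k:ℝ)+1)) :=
    ae_all_iff.mpr fun k => by
      have := mu_top_zero hY hcond hmeas ℓ k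
      exact measure_eq_zero_iff_ae_notMem.mp this
  have hBz : ∀ᵐ ω ∂μ, ∀ k : ℕ, ¬ (∀ n : ℕ, 1/((k:ℝ)+1) ≤ F ℓ ω (-(n:ℝ))) :=
    ae_all_iff.mpr fun k => by
      have := mu_bot_zero hY hcond hmeas ℓ k
      exact measure_eq_zero_iff_ae_notMem.mp this
  filter_upwards [hcont ℓ, hq', hTz, hBz] with ω hcm hic hT hB
  obtain ⟨hc, hm⟩ := hcm
  have hIcc : ∀ z : ℝ, F ℓ ω z ∈ Icc (0:ℝ) 1 := by
    intro z
    obtain ⟨q, hq⟩ := exists_rat_lt z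
    obtain ⟨q', hq'2⟩ := exists_rat_gt z
    exact ⟨le_trans (hic q).1 (hm hq).le, le_trans (hm hq'2).le (hic q').2⟩
  have hIoo : ∀ z : ℝ, F ℓ ω z ∈ Ioo (0:ℝ) 1 := by
    intro z
    obtain ⟨q, hq⟩ := exists_rat_lt z
    obtain ⟨q', hq'2⟩ := exists_rat_gt z
    exact ⟨lt_of_le_of_lt (hic q).1 (hm hq), lt_of_lt_of_le (hm hq'2) (hic q').2⟩
  have hmono := hm.monotone
  have hbdd : BddAbove (range (F ℓ ω)) := ⟨1, by rintro x ⟨z, rfl⟩; exact (hIcc z).2⟩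
  have hbddb : BddBelow (range (F ℓ ω)) := ⟨0, by rintro x ⟨z, rfl⟩; exact (hIcc z).1⟩
  refine ⟨hc, hm, hIoo, ?_, ?_⟩
  · have h1 := tendsto_atTop_ciSup hmono hbdd
    have hsup : ⨆ z, F ℓ ω z = 1 := by
      apply le_antisymm (ciSup_le fun z => (hIcc z).2)
      apply le_of_forall_lt
      intro c hc1
      obtain ⟨k, hk⟩ := exists_nat_one_div_lt (by linarith : (0:ℝ) < 1 - c)
      have h2 := hT k
      push_neg at h2
      obtain ⟨n, hn⟩ := h2
      calc c < 1 - 1/((k:ℝ)+1) := by linarith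
        _ < F ℓ ω n := hn
        _ ≤ ⨆ z, F ℓ ω z := le_ciSup hbdd _
    rwa [hsup] at h1
  · have h1 := tendsto_atBot_ciInf hmono hbddb
    have hinf : ⨅ z, F ℓ ω z = 0 := by
      apply le_antisymm
      · apply le_of_forall_gt
        intro c hc1
        obtain ⟨k, hk⟩ := exists_nat_one_div_lt hc1
        have h2 := hB k
        push_neg at h2
        obtain ⟨n, hn⟩ := h2
        calc ⨅ z, F ℓ ω z ≤ F ℓ ω (-(n:ℝ)) := ciInf_le hbddb _
          _ < 1/((k:ℝ)+1) := hn
          _ < c := hk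
      · exact le_ciInf fun z => (hIcc z).1
    rwa [hinf] at h1
end Core2

open MeasureTheory ProbabilityTheory Set Filter Topology
set_option linter.unusedSectionVars false
set_option maxHeartbeats 1000000

section Core3
variable {Ω : Type*} [mΩ : MeasurableSpace Ω]

lemma meas_comp_rat {m' : MeasurableSpace Ω} {G : Ω → ℝ → ℝ}
    (hG : ∀ q : ℚ, Measurable[m'] fun ω => G ω (q:ℝ)) {h : Ω → ℚ}
    (hh : Measurable[m'] h) : Measurable[m'] fun ω => G ω ((h ω : ℚ) : ℝ) := by
  intro B hB
  have heq : (fun ω => G ω ((h ω : ℚ) : ℝ)) ⁻¹' B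
      = ⋃ q : ℚ, (h ⁻¹' {q}) ∩ ((fun ω => G ω (q:ℝ)) ⁻¹' B) := by
    ext ω
    simp only [mem_preimage, mem_iUnion, mem_inter_iff, mem_singleton_iff]
    constructor
    · intro hω; exact ⟨h ω, rfl, hω⟩
    · rintro ⟨q, rfl, hω⟩; exact hω
  rw [heq]
  exact MeasurableSet.iUnion fun q => (hh (measurableSet_singleton q)).inter (hG q hB)
end Core3
section Core4
variable {Ω : Type*} [mΩ : MeasurableSpace Ω] {μ : Measure Ω} [IsProbabilityMeasure μ]
  {d : ℕ} {Y : Ω → Fin d → ℝ} {F : Fin d → Ω → ℝ → ℝ}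

lemma ae_icc_rat (hY : Measurable Y) (hcond : condhyp μ Y F) (ℓ : Fin d) :
    ∀ᵐ ω ∂μ, ∀ q : ℚ, F ℓ ω (q:ℝ) ∈ Icc (0:ℝ) 1 :=
  ae_all_iff.mpr fun q => ae_icc hY hcond ℓ q

lemma integrable_F_comp (hY : Measurable Y) (hcond : condhyp μ Y F)
    (hmeas : ∀ (ℓ : Fin d) (z : ℝ), Measurable[past Y ℓ] (fun ω => F ℓ ω z))
    (ℓ : Fin d) {h : Ω → ℚ} (hh : Measurable[past Y ℓ] h) :
    Integrable (fun ω => F ℓ ω ((h ω : ℚ) : ℝ)) μ := by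
  have hms : Measurable[past Y ℓ] (fun ω => F ℓ ω ((h ω : ℚ) : ℝ)) :=
    meas_comp_rat (fun q => hmeas ℓ q) hh
  have hm : Measurable (fun ω => F ℓ ω ((h ω : ℚ) : ℝ)) := hms.mono (past_le hY ℓ) le_rfl
  apply Integrable.mono' (integrable_const (1:ℝ)) hm.aestronglyMeasurable
  filter_upwards [ae_icc_rat hY hcond ℓ] with ω hic
  rw [Real.norm_eq_abs, abs_le]
  exact ⟨by linarith [(hic (h ω)).1], (hic (h ω)).2⟩

lemma setIntegral_F_comp (hY : Measurable Y) (hcond : condhyp μ Y F)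
    (hmeas : ∀ (ℓ : Fin d) (z : ℝ), Measurable[past Y ℓ] (fun ω => F ℓ ω z))
    (ℓ : Fin d) {h : Ω → ℚ} (hh : Measurable[past Y ℓ] h)
    {A : Set Ω} (hA : MeasurableSet[past Y ℓ] A) :
    ∫ ω in A, F ℓ ω ((h ω : ℚ) : ℝ) ∂μ
      = (μ ({ω | Y ω ℓ ≤ ((h ω : ℚ) : ℝ)} ∩ A)).toReal := by
  have hle := past_le hY ℓ
  set P : ℚ → Set Ω := fun q => A ∩ h ⁻¹' {q} with hP
  have hPG : ∀ q, MeasurableSet[past Y ℓ] (P q) :=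
    fun q => hA.inter (hh (measurableSet_singleton q))
  have hPm : ∀ q, MeasurableSet (P q) := fun q => hle _ (hPG q)
  have hdisj : Pairwise (Function.onFun Disjoint P) := by
    intro q q' hqq'
    apply Set.disjoint_left.mpr
    rintro ω ⟨_, hω⟩ ⟨_, hω'⟩
    exact hqq' (hω.symm.trans hω')
  have hcover : ⋃ q : ℚ, P q = A := by
    ext ω; simp [hP]
  have hint := integrable_F_comp hY hcond hmeas ℓ hh
  calc ∫ ω in A, F ℓ ω ((h ω : ℚ) : ℝ) ∂μ
      = ∫ ω in ⋃ q : ℚ, P q, F ℓ ω ((h ω : ℚ) : ℝ) ∂μ := by rw [hcover]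
    _ = ∑' q : ℚ, ∫ ω in P q, F ℓ ω ((h ω : ℚ) : ℝ) ∂μ :=
        integral_iUnion hPm hdisj hint.integrableOn
    _ = ∑' q : ℚ, (μ ({ω | Y ω ℓ ≤ (q:ℝ)} ∩ P q)).toReal := by
        apply tsum_congr
        intro q
        rw [show ∫ ω in P q, F ℓ ω ((h ω : ℚ) : ℝ) ∂μ = ∫ ω in P q, F ℓ ω (q:ℝ) ∂μ from
          setIntegral_congr_fun (hPm q) (fun ω hω => by rw [hω.2])]
        exact setIntegral_F hY hcond ℓ q (hPG q)
    _ = (∑' q : ℚ, μ ({ω | Y ω ℓ ≤ (q:ℝ)} ∩ P q)).toReal :=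
        (ENNReal.tsum_toReal_eq (fun q => measure_ne_top μ _)).symm
    _ = (μ (⋃ q : ℚ, ({ω | Y ω ℓ ≤ (q:ℝ)} ∩ P q))).toReal := by
        rw [measure_iUnion (fun q q' hqq' =>
          (hdisj hqq').mono inter_subset_right inter_subset_right)
          (fun q : ℚ => (measurableSet_Yle hY ℓ q).inter (hPm q))]
    _ = (μ ({ω | Y ω ℓ ≤ ((h ω : ℚ) : ℝ)} ∩ A)).toReal := by
        have hseteq : (⋃ q : ℚ, ({ω | Y ω ℓ ≤ (q:ℝ)} ∩ P q))
            = {ω | Y ω ℓ ≤ ((h ω : ℚ) : ℝ)} ∩ A := by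
          ext ω
          simp only [mem_iUnion, mem_inter_iff, mem_setOf_eq, mem_preimage,
            mem_singleton_iff, hP]
          constructor
          · rintro ⟨q, hq, hA', rfl⟩; exact ⟨hq, hA'⟩
          · rintro ⟨hq, hA'⟩; exact ⟨h ω, hq, hA', rfl⟩
        rw [hseteq]
end Core4
section Core5
variable {Ω : Type*} [mΩ : MeasurableSpace Ω] {μ : Measure Ω} [IsProbabilityMeasure μ]
  {d : ℕ} {Y : Ω → Fin d → ℝ} {F : Fin d → Ω → ℝ → ℝ}

lemma key_inter (hY : Measurable Y) (hcond : condhyp μ Y F)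
    (hmeas : ∀ (ℓ : Fin d) (z : ℝ), Measurable[past Y ℓ] (fun ω => F ℓ ω z))
    (hcont : ∀ ℓ : Fin d, ∀ᵐ ω ∂μ, Continuous (F ℓ ω) ∧ StrictMono (F ℓ ω))
    (ℓ : Fin d) {t : ℝ} (h0 : 0 < t) (h1 : t < 1)
    {A : Set Ω} (hA : MeasurableSet[past Y ℓ] A) :
    μ ({ω | F ℓ ω (Y ω ℓ) ≤ t} ∩ A) = ENNReal.ofReal t * μ A := by
  have hle := past_le hY ℓ
  have hAm : MeasurableSet A := hle _ hA
  have hgood := ae_good hY hcond hmeas hcont ℓ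
  set Q : Ω → ℝ := fun ω => quant (F ℓ ω) t with hQdef
  have hQmeas : Measurable[past Y ℓ] Q := measurable_quant_comp (fun z => hmeas ℓ z)
  have hQt : ∀ᵐ ω ∂μ, F ℓ ω (Q ω) = t := by
    filter_upwards [hgood] with ω hg
    obtain ⟨z, hz⟩ := hg.exists_eq h0 h1
    rw [hQdef]
    simp only
    rw [hg.quant_eq hz, hz]
  -- rewrite the event
  have hev : μ ({ω | F ℓ ω (Y ω ℓ) ≤ t} ∩ A) = μ ({ω | Y ω ℓ ≤ Q ω} ∩ A) := by
    apply measure_congr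
    apply Filter.eventuallyEq_set.mpr
    filter_upwards [hgood, hQt] with ω hg hq
    simp only [mem_inter_iff, mem_setOf_eq]
    rw [← hq]
    exact and_congr_left fun _ => hg.2.1.le_iff_le
  rw [hev]
  -- dyadic approximations of Q
  have hhU : ∀ n : ℕ, Measurable[past Y ℓ] (fun ω => dyU n (Q ω)) :=
    fun n => (measurable_dyU n).comp hQmeas
  have hhD : ∀ n : ℕ, Measurable[past Y ℓ] (fun ω => dyD n (Q ω)) :=
    fun n => (measurable_dyD n).comp hQmeas
  have hIU : ∀ n : ℕ, ∫ ω in A, F ℓ ω ((dyU n (Q ω) : ℚ) : ℝ) ∂μ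
      = (μ ({ω | Y ω ℓ ≤ ((dyU n (Q ω) : ℚ) : ℝ)} ∩ A)).toReal :=
    fun n => setIntegral_F_comp hY hcond hmeas ℓ (hhU n) hA
  have hID : ∀ n : ℕ, ∫ ω in A, F ℓ ω ((dyD n (Q ω) : ℚ) : ℝ) ∂μ
      = (μ ({ω | Y ω ℓ ≤ ((dyD n (Q ω) : ℚ) : ℝ)} ∩ A)).toReal :=
    fun n => setIntegral_F_comp hY hcond hmeas ℓ (hhD n) hA
  -- dominated convergence for both
  have hDCT : ∀ (g : ℕ → Ω → ℚ), (∀ n, Measurable[past Y ℓ] (g n)) →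
      (∀ ω, Tendsto (fun n => ((g n ω : ℚ) : ℝ)) atTop (𝓝 (Q ω))) →
      Tendsto (fun n => ∫ ω in A, F ℓ ω ((g n ω : ℚ) : ℝ) ∂μ) atTop
        (𝓝 (t * (μ A).toReal)) := by
    intro g hgm hgt
    have hlim : Tendsto (fun n => ∫ ω in A, F ℓ ω ((g n ω : ℚ) : ℝ) ∂μ) atTop
        (𝓝 (∫ _ω in A, t ∂μ)) := by
      apply tendsto_integral_of_dominated_convergence (fun _ => (1:ℝ))
      · intro n
        exact ((meas_comp_rat (fun q => hmeas ℓ q) (hgm n)).mono hle le_rfl).aestronglyMeasurable.restrict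
      · exact integrableOn_const (measure_lt_top μ A).ne
      · intro n
        apply ae_restrict_of_ae
        filter_upwards [ae_icc_rat hY hcond ℓ] with ω hic
        rw [Real.norm_eq_abs, abs_le]
        exact ⟨by linarith [(hic (g n ω)).1], (hic (g n ω)).2⟩
      · apply ae_restrict_of_ae
        filter_upwards [hgood, hQt] with ω hg hq
        rw [← hq]
        exact ((hg.1.tendsto (Q ω)).comp (hgt ω))
    rwa [setIntegral_const, smul_eq_mul, mul_comm] at hlim
  have hTU := hDCT (fun n ω => dyU n (Q ω)) hhU (fun ω => tendsto_dyU (Q ω))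
  have hTD := hDCT (fun n ω => dyD n (Q ω)) hhD (fun ω => tendsto_dyD (Q ω))
  -- sandwich
  have hup : ∀ n : ℕ, (μ ({ω | Y ω ℓ ≤ Q ω} ∩ A)).toReal
      ≤ ∫ ω in A, F ℓ ω ((dyU n (Q ω) : ℚ) : ℝ) ∂μ := by
    intro n
    rw [hIU n]
    apply ENNReal.toReal_mono (measure_ne_top μ _)
    apply measure_mono
    apply inter_subset_inter_left
    intro ω hω
    exact le_trans hω (le_dyU n (Q ω))
  have hdown : ∀ n : ℕ, ∫ ω in A, F ℓ ω ((dyD n (Q ω) : ℚ) : ℝ) ∂μ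
      ≤ (μ ({ω | Y ω ℓ ≤ Q ω} ∩ A)).toReal := by
    intro n
    rw [hID n]
    apply ENNReal.toReal_mono (measure_ne_top μ _)
    apply measure_mono
    apply inter_subset_inter_left
    intro ω hω
    exact le_trans hω (dyD_lt n (Q ω)).le
  have heq : (μ ({ω | Y ω ℓ ≤ Q ω} ∩ A)).toReal = t * (μ A).toReal :=
    le_antisymm (ge_of_tendsto hTU (Eventually.of_forall hup))
      (le_of_tendsto hTD (Eventually.of_forall hdown))
  have := ENNReal.ofReal_toReal (measure_ne_top μ ({ω | Y ω ℓ ≤ Q ω} ∩ A))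
  rw [← this, heq, ENNReal.ofReal_mul h0.le, ENNReal.ofReal_toReal (measure_ne_top μ A)]
end Core5
section Core6
variable {Ω : Type*} [mΩ : MeasurableSpace Ω] {μ : Measure Ω} [IsProbabilityMeasure μ]
  {d : ℕ} {Y : Ω → Fin d → ℝ} {F : Fin d → Ω → ℝ → ℝ}

variable (Y F) in
noncomputable def Vfun (ℓ : Fin d) (ω : Ω) : ℝ :=
  ⨅ n : ℕ, F ℓ ω ((dyU n (Y ω ℓ) : ℚ) : ℝ)

lemma Vfun_meas (hmeas : ∀ (ℓ : Fin d) (z : ℝ), Measurable[past Y ℓ] (fun ω => F ℓ ω z))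
    (ℓ : Fin d) :
    Measurable[past Y ℓ ⊔ MeasurableSpace.comap (fun ω => Y ω ℓ) inferInstance]
      (Vfun Y F ℓ) := by
  have hYℓ : Measurable[past Y ℓ ⊔ MeasurableSpace.comap (fun ω => Y ω ℓ) inferInstance]
      (fun ω => Y ω ℓ) := by
    have h1 : Measurable[MeasurableSpace.comap (fun ω => Y ω ℓ) inferInstance]
        (fun ω => Y ω ℓ) := fun s hs => ⟨s, hs, rfl⟩
    exact h1.mono le_sup_right le_rfl
  exact Measurable.iInf (fun n => meas_comp_rat
    (fun q => (hmeas ℓ q).mono (le_sup_left : past Y ℓ ≤ past Y ℓ ⊔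
      MeasurableSpace.comap (fun ω => Y ω ℓ) inferInstance) le_rfl)
    (fun s hs => hYℓ ((measurable_dyU n) hs)))

lemma Vfun_eq {ℓ : Fin d} {ω : Ω} (hg : IsGood (F ℓ ω)) :
    Vfun Y F ℓ ω = F ℓ ω (Y ω ℓ) := by
  rw [Vfun]
  have hbdd : BddBelow (range fun n : ℕ => F ℓ ω ((dyU n (Y ω ℓ) : ℚ) : ℝ)) :=
    ⟨0, by rintro x ⟨n, rfl⟩; exact (hg.2.2.1 _).1.le⟩
  have htend : Tendsto (fun n : ℕ => F ℓ ω ((dyU n (Y ω ℓ) : ℚ) : ℝ)) atTop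
      (𝓝 (F ℓ ω (Y ω ℓ))) :=
    (hg.1.tendsto (Y ω ℓ)).comp (tendsto_dyU (Y ω ℓ))
  apply le_antisymm
  · exact ge_of_tendsto htend (Eventually.of_forall fun n => ciInf_le hbdd n)
  · exact le_ciInf fun n => hg.2.1.monotone (le_dyU n (Y ω ℓ))

lemma ae_V_eq (hY : Measurable Y) (hcond : condhyp μ Y F)
    (hmeas : ∀ (ℓ : Fin d) (z : ℝ), Measurable[past Y ℓ] (fun ω => F ℓ ω z))
    (hcont : ∀ ℓ : Fin d, ∀ᵐ ω ∂μ, Continuous (F ℓ ω) ∧ StrictMono (F ℓ ω)) (ℓ : Fin d) :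
    (fun ω => F ℓ ω (Y ω ℓ)) =ᵐ[μ] Vfun Y F ℓ :=
  (ae_good hY hcond hmeas hcont ℓ).mono fun ω hg => (Vfun_eq hg).symm

lemma law_Iic (hY : Measurable Y) (hcond : condhyp μ Y F)
    (hmeas : ∀ (ℓ : Fin d) (z : ℝ), Measurable[past Y ℓ] (fun ω => F ℓ ω z))
    (hcont : ∀ ℓ : Fin d, ∀ᵐ ω ∂μ, Continuous (F ℓ ω) ∧ StrictMono (F ℓ ω))
    (ℓ : Fin d) (t : ℝ) {A : Set Ω} (hA : MeasurableSet[past Y ℓ] A) :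
    μ ({ω | F ℓ ω (Y ω ℓ) ≤ t} ∩ A) = ENNReal.ofReal (min t 1) * μ A := by
  have hgood := ae_good hY hcond hmeas hcont ℓ
  rcases le_or_gt t 0 with ht | ht
  · have h0 : μ {ω | F ℓ ω (Y ω ℓ) ≤ t} = 0 := by
      apply measure_eq_zero_iff_ae_notMem.mpr
      filter_upwards [hgood] with ω hg
      simp only [mem_setOf_eq, not_le]
      exact lt_of_le_of_lt ht (hg.2.2.1 (Y ω ℓ)).1
    have h1 : μ ({ω | F ℓ ω (Y ω ℓ) ≤ t} ∩ A) = 0 :=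
      measure_mono_null inter_subset_left h0
    rw [h1, ENNReal.ofReal_eq_zero.mpr (by simp [ht]), zero_mul]
  rcases lt_or_ge t 1 with ht1 | ht1
  · rw [min_eq_left ht1.le]
    exact key_inter hY hcond hmeas hcont ℓ ht ht1 hA
  · rw [min_eq_right ht1, ENNReal.ofReal_one, one_mul]
    apply measure_congr
    apply Filter.eventuallyEq_set.mpr
    filter_upwards [hgood] with ω hg
    simp only [mem_inter_iff, mem_setOf_eq, and_iff_right_iff_imp]
    intro _
    exact le_trans (hg.2.2.1 (Y ω ℓ)).2.le ht1

lemma law_val (hY : Measurable Y) (hcond : condhyp μ Y F)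
    (hmeas : ∀ (ℓ : Fin d) (z : ℝ), Measurable[past Y ℓ] (fun ω => F ℓ ω z))
    (hcont : ∀ ℓ : Fin d, ∀ᵐ ω ∂μ, Continuous (F ℓ ω) ∧ StrictMono (F ℓ ω))
    (ℓ : Fin d) (t : ℝ) :
    μ {ω | F ℓ ω (Y ω ℓ) ≤ t} = ENNReal.ofReal (min t 1) := by
  have := law_Iic hY hcond hmeas hcont ℓ t (@MeasurableSet.univ Ω (past Y ℓ))
  rwa [inter_univ, measure_univ, mul_one] at this

end Core6
section Core7
variable {Ω : Type*} [mΩ : MeasurableSpace Ω] {μ : Measure Ω} [IsProbabilityMeasure μ]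
  {d : ℕ} {Y : Ω → Fin d → ℝ} {F : Fin d → Ω → ℝ → ℝ}

lemma Vfun_meas' (hY : Measurable Y)
    (hmeas : ∀ (ℓ : Fin d) (z : ℝ), Measurable[past Y ℓ] (fun ω => F ℓ ω z)) (ℓ : Fin d) :
    Measurable (Vfun Y F ℓ) :=
  (Vfun_meas hmeas ℓ).mono
    (sup_le (past_le hY ℓ) ((measurable_pi_apply ℓ).comp hY).comap_le) le_rfl

lemma V_indep (hY : Measurable Y) (hcond : condhyp μ Y F)
    (hmeas : ∀ (ℓ : Fin d) (z : ℝ), Measurable[past Y ℓ] (fun ω => F ℓ ω z))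
    (hcont : ∀ ℓ : Fin d, ∀ᵐ ω ∂μ, Continuous (F ℓ ω) ∧ StrictMono (F ℓ ω)) :
    iIndepFun (Vfun Y F) μ := by
  have hVm' : ∀ ℓ, Measurable (Vfun Y F ℓ) := Vfun_meas' hY hmeas
  rw [iIndepFun_iff_iIndep]
  refine iIndepSets.iIndep (fun i => (hVm' i).comap_le)
    (fun i => (preimage (Vfun Y F i)) '' (range Iic)) (fun i => isPiSystem_Iic.comap _)
    (fun i => ?_) ?_
  · rw [show Real.measurableSpace = borel ℝ from BorelSpace.measurable_eq,
      borel_eq_generateFrom_Iic ℝ, MeasurableSpace.comap_generateFrom]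
  · rw [iIndepSets_iff]
    suffices H : ∀ n (S : Finset (Fin d)), S.card ≤ n → ∀ f : Fin d → Set Ω,
        (∀ i ∈ S, f i ∈ preimage (Vfun Y F i) '' range Iic) →
        μ (⋂ i ∈ S, f i) = ∏ i ∈ S, μ (f i) by
      intro S f hf
      exact H S.card S le_rfl f hf
    intro n
    induction n with
    | zero =>
      intro S hS f hf
      have hS0 : S = ∅ := Finset.card_eq_zero.mp (Nat.le_zero.mp hS)
      subst hS0
      simp
    | succ n ih =>
      intro S hS f hf
      rcases S.eq_empty_or_nonempty with rfl | hne
      · simp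
      set m := S.max' hne with hm
      have hmS : m ∈ S := S.max'_mem hne
      have hcard : (S.erase m).card ≤ n := by
        have := Finset.card_erase_of_mem hmS
        have := Finset.card_pos.mpr hne
        omega
      obtain ⟨s0, ⟨tm, rfl⟩, hfm⟩ := hf m hmS
      have hBG : MeasurableSet[past Y m] (⋂ i ∈ S.erase m, f i) := by
        apply MeasurableSet.biInter (Finset.countable_toSet (S.erase m))
        intro i hi
        have hilt : i < m :=
          lt_of_le_of_ne (S.le_max' i (Finset.mem_of_mem_erase hi)) (Finset.ne_of_mem_erase hi)
        obtain ⟨s1, ⟨ti, rfl⟩, hfi⟩ := hf i (Finset.mem_of_mem_erase hi)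
        rw [← hfi]
        have hle2 : past Y i ⊔ MeasurableSpace.comap (fun ω => Y ω i) inferInstance
            ≤ past Y m := sup_le (past_mono hilt.le) (comap_le_past hilt)
        exact ((Vfun_meas hmeas i).mono hle2 le_rfl) measurableSet_Iic
      have hae := ae_V_eq hY hcond hmeas hcont m
      have h1 : μ (Vfun Y F m ⁻¹' Iic tm ∩ ⋂ i ∈ S.erase m, f i)
          = μ ({ω | F m ω (Y ω m) ≤ tm} ∩ ⋂ i ∈ S.erase m, f i) := by
        apply measure_congr
        apply Filter.eventuallyEq_set.mpr
        filter_upwards [hae] with ω hω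
        simp only [mem_inter_iff, mem_preimage, mem_Iic, mem_setOf_eq, hω]
      have h2 : μ (Vfun Y F m ⁻¹' Iic tm) = μ {ω | F m ω (Y ω m) ≤ tm} := by
        apply measure_congr
        apply Filter.eventuallyEq_set.mpr
        filter_upwards [hae] with ω hω
        simp only [mem_preimage, mem_Iic, mem_setOf_eq, hω]
      have hkey : μ (Vfun Y F m ⁻¹' Iic tm ∩ ⋂ i ∈ S.erase m, f i)
          = μ (Vfun Y F m ⁻¹' Iic tm) * μ (⋂ i ∈ S.erase m, f i) := by
        rw [h1, h2, law_Iic hY hcond hmeas hcont m tm hBG,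
          law_val hY hcond hmeas hcont m tm]
      rw [← Finset.insert_erase hmS, Finset.set_biInter_insert,
        Finset.prod_insert (Finset.notMem_erase m S), ← hfm, hkey,
        ih (S.erase m) hcard f (fun i hi => hf i (Finset.mem_of_mem_erase hi))]
end Core7

theorem rosenblatt_transform {Ω : Type*} [mΩ : MeasurableSpace Ω] (μ : Measure Ω)
    [IsProbabilityMeasure μ]
    (d : ℕ) (Y : Ω → Fin d → ℝ) (hY : Measurable Y)
    (F : Fin d → Ω → ℝ → ℝ)
    -- F ℓ ω z depends on ω only through Y₁,…,Y_{ℓ-1} :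
    (hmeas : ∀ (ℓ : Fin d) (z : ℝ),
      Measurable[⨆ j < ℓ, MeasurableSpace.comap (fun ω => Y ω j) inferInstance]
        (fun ω => F ℓ ω z))
    -- F ℓ ω · is the conditional CDF of Y_ℓ given Y₁,…,Y_{ℓ-1} :
    (hcond : ∀ (ℓ : Fin d) (z : ℝ),
      (fun ω => F ℓ ω z) =ᵐ[μ]
        μ[Set.indicator {ω | Y ω ℓ ≤ z} (fun _ => (1:ℝ)) |
          ⨆ j < ℓ, MeasurableSpace.comap (fun ω => Y ω j) inferInstance])
    (hcont : ∀ ℓ : Fin d, ∀ᵐ ω ∂μ, Continuous (F ℓ ω) ∧ StrictMono (F ℓ ω)) :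
    iIndepFun (fun (ℓ : Fin d) ω => F ℓ ω (Y ω ℓ)) μ ∧
      ∀ ℓ : Fin d, Measure.map (fun ω => F ℓ ω (Y ω ℓ)) μ
        = volume.restrict (Set.Icc (0:ℝ) 1) := by
  have hcond' : condhyp μ Y F := hcond
  have hmeas' : ∀ (ℓ : Fin d) (z : ℝ), Measurable[past Y ℓ] (fun ω => F ℓ ω z) := hmeas
  have hVm : ∀ ℓ, Measurable (Vfun Y F ℓ) := Vfun_meas' hY hmeas'
  have hae : ∀ ℓ, (fun ω => F ℓ ω (Y ω ℓ)) =ᵐ[μ] Vfun Y F ℓ :=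
    fun ℓ => ae_V_eq hY hcond' hmeas' hcont ℓ
  constructor
  · rw [iIndepFun_iff_measure_inter_preimage_eq_mul]
    intro S sets hsets
    have hV := (V_indep hY hcond' hmeas' hcont).measure_inter_preimage_eq_mul S hsets
    have hall : ∀ᵐ ω ∂μ, ∀ ℓ : Fin d, F ℓ ω (Y ω ℓ) = Vfun Y F ℓ ω := ae_all_iff.mpr hae
    have e1 : μ (⋂ i ∈ S, (fun ω => F i ω (Y ω i)) ⁻¹' sets i)
        = μ (⋂ i ∈ S, Vfun Y F i ⁻¹' sets i) := by
      apply measure_congr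
      apply Filter.eventuallyEq_set.mpr
      filter_upwards [hall] with ω hω
      simp only [mem_iInter, mem_preimage]
      constructor <;> intro h i hi
      · rw [← hω i]; exact h i hi
      · rw [hω i]; exact h i hi
    have e2 : ∀ i, μ ((fun ω => F i ω (Y ω i)) ⁻¹' sets i) = μ (Vfun Y F i ⁻¹' sets i) := by
      intro i
      apply measure_congr
      apply Filter.eventuallyEq_set.mpr
      filter_upwards [hae i] with ω hω
      simp only [mem_preimage, hω]
    rw [e1, hV]
    exact (Finset.prod_congr rfl fun i _ => (e2 i).symm)
  · intro ℓ
    rw [Measure.map_congr (hae ℓ)]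
    haveI : IsProbabilityMeasure (μ.map (Vfun Y F ℓ)) :=
      Measure.isProbabilityMeasure_map (hVm ℓ).aemeasurable
    apply Measure.ext_of_Iic
    intro a
    rw [Measure.map_apply (hVm ℓ) measurableSet_Iic]
    have h2 : μ (Vfun Y F ℓ ⁻¹' Iic a) = μ {ω | F ℓ ω (Y ω ℓ) ≤ a} := by
      apply measure_congr
      apply Filter.eventuallyEq_set.mpr
      filter_upwards [hae ℓ] with ω hω
      simp only [mem_preimage, mem_Iic, mem_setOf_eq, hω]
    rw [h2, law_val hY hcond' hmeas' hcont ℓ a, Measure.restrict_apply measurableSet_Iic]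
    rcases lt_or_ge a 0 with ha | ha
    · have hempty : Iic a ∩ Icc (0:ℝ) 1 = ∅ := by
        ext x
        simp only [mem_inter_iff, mem_Iic, mem_Icc, mem_empty_iff_false, iff_false, not_and]
        intro h1 h2
        exact absurd h2 (by linarith)
      rw [hempty, measure_empty]
      exact ENNReal.ofReal_eq_zero.mpr (le_trans (min_le_left a 1) ha.le)
    · have hIcc : Iic a ∩ Icc (0:ℝ) 1 = Icc 0 (min a 1) := by
        ext x
        simp only [mem_inter_iff, mem_Iic, mem_Icc, le_min_iff]
        constructor
        · rintro ⟨h1, h2, h3⟩; exact ⟨h2, h1, h3⟩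
        · rintro ⟨h1, h2, h3⟩; exact ⟨h2, h1, h3⟩
      rw [hIcc, Real.volume_Icc, sub_zero]
end
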